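/- Nonstandard characterization of the derivative: let f : ℝ → ℝ, let x, L be real numbers, and let f* : ℝ* → ℝ* denote the hyperreal extension of f. Then f has derivative L at x (HasDerivAt f L x) if and only if for every infinitesimal hyperreal ε with ε ≠ 0, the hyperreal (f*((x : ℝ*) + ε) − (f x : ℝ*)) / ε − (L : ℝ*) is infinitesimal. -/

import Mathlib

open Filter Topology
open Hyperreal (ofSeq ofSeq_surjective Infinitesimal isSt_ofSeq_iff_tendsto)

/-- The hyperreal extension `f*` of a real function `f`, given by applying `f`
pointwise to representing sequences (i.e., `Filter.Germ.map f`). -/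
noncomputable def Hyperreal.extension (f : ℝ → ℝ) : ℝ* → ℝ* :=
  Filter.Germ.map f

lemma extension_expr_eq (f : ℝ → ℝ) (x L : ℝ) (u : ℕ → ℝ) :
    (Hyperreal.extension f ((x : ℝ*) + ofSeq u) - ((f x : ℝ) : ℝ*)) / ofSeq u - (L : ℝ*)
      = ofSeq (fun n => (f (x + u n) - f x) / u n - L) := rfl

lemma ofSeq_ne_zero_mem {u : ℕ → ℝ} (h : ofSeq u ≠ 0) :
    {n | u n ≠ 0} ∈ hyperfilter ℕ := by
  by_contra hmem
  apply h
  have : {n | u n = 0} ∈ hyperfilter ℕ := by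
    have := (Ultrafilter.compl_mem_iff_notMem (f := hyperfilter ℕ)
      (s := {n | u n ≠ 0})).2 hmem
    simpa [Set.compl_setOf] using this
  exact Filter.Germ.coe_eq.2 this

theorem hasDerivAt_iff_infinitesimal (f : ℝ → ℝ) (x L : ℝ) :
    HasDerivAt f L x ↔
      ∀ ε : ℝ*, Hyperreal.Infinitesimal ε → ε ≠ 0 →
        Hyperreal.Infinitesimal
          ((Hyperreal.extension f ((x : ℝ*) + ε) - ((f x : ℝ) : ℝ*)) / ε - (L : ℝ*)) := by
  rw [hasDerivAt_iff_tendsto_slope_zero]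
  constructor
  · intro hd ε hε hne
    obtain ⟨u, rfl⟩ := ofSeq_surjective ε
    rw [extension_expr_eq]
    rw [Infinitesimal, isSt_ofSeq_iff_tendsto] at hε ⊢
    have hne' : ∀ᶠ n in hyperfilter ℕ, u n ≠ 0 := ofSeq_ne_zero_mem hne
    have htend : Tendsto u (hyperfilter ℕ : Filter ℕ) (𝓝[≠] (0:ℝ)) := by
      rw [tendsto_nhdsWithin_iff]
      exact ⟨hε, hne'⟩
    have h2 := (hd.comp htend).sub_const L
    have heq : (fun n => (f (x + u n) - f x) / u n - L)
        = fun n => ((fun t => t⁻¹ • (f (x + t) - f x)) ∘ u) n - L := by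
      funext n
      simp [Function.comp, div_eq_inv_mul]
    rw [heq]
    simpa using h2
  · intro h
    rw [tendsto_nhds]
    by_contra hcon
    push_neg at hcon
    obtain ⟨s, hs_open, hLs, hfreq⟩ := hcon
    have hchoice : ∀ n : ℕ, ∃ t : ℝ, t ≠ 0 ∧ |t| < 1 / (n + 1) ∧
        ¬ t⁻¹ • (f (x + t) - f x) ∈ s := by
      intro n
      by_contra hno
      push_neg at hno
      apply hfreq
      have hball : {t : ℝ | |t| < 1 / (n + 1)} ∈ 𝓝[≠] (0:ℝ) := by
        apply mem_nhdsWithin_of_mem_nhds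
        have : (0:ℝ) < 1 / (n + 1) := by positivity
        simpa [abs_lt, Real.ball_eq_Ioo, Set.Ioo] using Metric.ball_mem_nhds (0:ℝ) this
      have hne : {t : ℝ | t ≠ 0} ∈ 𝓝[≠] (0:ℝ) := self_mem_nhdsWithin
      filter_upwards [hball, hne] with t ht1 ht2 using hno t ht2 ht1
    choose u hu0 husmall hubad using hchoice
    have hinf : Infinitesimal (ofSeq u) := by
      rw [Infinitesimal, isSt_ofSeq_iff_tendsto]
      have : Tendsto u atTop (𝓝 0) := by
        rw [tendsto_iff_dist_tendsto_zero]
        apply squeeze_zero (fun n => dist_nonneg) (fun n => (le_of_lt (by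
          simpa [Real.dist_eq] using husmall n)))
        simpa [one_div] using tendsto_one_div_add_atTop_nhds_zero_nat (𝕜 := ℝ)
      exact this.mono_left Nat.hyperfilter_le_atTop
    have hne : ofSeq u ≠ 0 := by
      intro h0
      have : {n | u n = 0} ∈ hyperfilter ℕ := Filter.Germ.coe_eq.1 h0
      obtain ⟨n, hn⟩ := Filter.nonempty_of_mem this
      exact hu0 n hn
    have := h (ofSeq u) hinf hne
    rw [extension_expr_eq, Infinitesimal, isSt_ofSeq_iff_tendsto] at this
    have hmem : ∀ᶠ n in hyperfilter ℕ,
        ((f (x + u n) - f x) / u n - L) + L ∈ s := by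
      have hcont : ContinuousAt (fun y : ℝ => y + L) 0 :=
        (continuous_add_right L).continuousAt
      have hs' : (fun y : ℝ => y + L) ⁻¹' s ∈ 𝓝 (0:ℝ) :=
        hcont.preimage_mem_nhds (by simpa using hs_open.mem_nhds hLs)
      have := this.eventually_mem hs'
      filter_upwards [this] with n hn using hn
    obtain ⟨n, hn⟩ := hmem.exists
    apply hubad n
    have : (u n)⁻¹ • (f (x + u n) - f x) = ((f (x + u n) - f x) / u n - L) + L := by
      simp [div_eq_inv_mul, smul_eq_mul]
    rw [this]
    exact hn
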